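/- For m, n ≥ 0, if n > 2m or n < m/2 then α_{m,n} = 0 (vanishing of α outside the range n/2 ≤ m ≤ 2n). -/

import Mathlib

open Finset LaurentPolynomial

noncomputable section

/-- `ℤ[q^{1/2}, q^{-1/2}]`, with `T 1` representing `q^{1/2}` (so `q = T 2`). -/
abbrev R : Type := LaurentPolynomial ℤ

/-- quantum integer `{i} = q^{i/2} - q^{-i/2}`. -/
def qint (i : ℤ) : R := T i - T (-i)

/-- falling product `{i}_n = {i}{i-1}⋯{i-n+1}`. -/
def qfall (i : ℤ) (n : ℕ) : R := ∏ k ∈ Finset.range n, qint (i - k)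

/-- quantum factorial `{n}! = {n}_n`. -/
def qfact (n : ℕ) : R := qfall n n

/-- balanced quantum binomial `[i choose n] = {i}_n / {n}!`,
defined inside `R` via the Pascal-type recursion
`[i+1 choose n+1] = q^{-(i-n)/2}[i choose n] + q^{(n+1)/2}[i choose n+1]`. -/
def qbinom : ℕ → ℕ → R
  | _, 0 => 1
  | 0, _ + 1 => 0
  | i + 1, n + 1 => T (-((i : ℤ) - n)) * qbinom i n + T ((n : ℤ) + 1) * qbinom i (n + 1)

/-- `α_{m,n} = Σ_{k=0}^{m} (-1)^k [2m+1 choose k][2m+n-2k+1 choose 2n+1]`. -/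
def qalpha (m n : ℕ) : R :=
  ∑ k ∈ Finset.range (m + 1),
    (-1 : R) ^ k * qbinom (2 * m + 1) k * qbinom (2 * m + n + 1 - 2 * k) (2 * n + 1)

/-- symmetric cyclotomic polynomial `Φ̃_l = q^{-φ(l)/2} Φ_l(q)
  = ∏_{d ∣ l} (q^{d/2} - q^{-d/2})^{μ(l/d)}`. -/
def qcyc (l : ℕ) : R :=
  T (-(Nat.totient l : ℤ)) *
    Polynomial.eval₂ (Int.castRingHom R) (T 2) (Polynomial.cyclotomic l ℤ)

namespace StmtAux

instance : IsDomain R := by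
  have : NoZeroDivisors R := inferInstanceAs (NoZeroDivisors (AddMonoidAlgebra ℤ ℤ))
  exact NoZeroDivisors.to_isDomain R

lemma two_ne_zero' : (2 : R) ≠ 0 := by
  have h2 : (2 : R) = AddMonoidAlgebra.single (0:ℤ) (2:ℤ) := by
    rw [show ((2:R) = ((2:ℕ) : AddMonoidAlgebra ℤ ℤ)) by norm_num,
      AddMonoidAlgebra.natCast_def]; norm_num
  rw [h2, Ne, AddMonoidAlgebra.single_eq_zero]; norm_num

lemma qint_zero : qint 0 = 0 := by simp [qint]

lemma qint_neg (i : ℤ) : qint (-i) = - qint i := by simp [qint]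

lemma qint_ne_zero {i : ℤ} (h : i ≠ 0) : qint i ≠ 0 := by
  simp only [qint, T, sub_ne_zero]
  intro he
  have := AddMonoidAlgebra.single_inj.mp he
  simp at this
  omega

lemma qfall_zero (i : ℤ) : qfall i 0 = 1 := by simp [qfall]

lemma qfall_succ (i : ℤ) (n : ℕ) : qfall i (n+1) = qfall i n * qint (i - n) :=
  Finset.prod_range_succ _ _

lemma qfall_succ' (i : ℤ) (n : ℕ) : qfall (i+1) (n+1) = qint (i+1) * qfall i n := by
  have h := Finset.prod_range_succ' (fun k : ℕ => qint (i + 1 - k)) n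
  have h2 : ∀ k ∈ Finset.range n, qint (i + 1 - ((k+1 : ℕ) : ℤ)) = qint (i - k) := by
    intro k _; congr 1; push_cast; ring
  rw [qfall, h, Finset.prod_congr rfl h2]
  rw [show qint (i + 1 - ((0:ℕ):ℤ)) = qint (i+1) by norm_num]
  rw [mul_comm]
  rfl

lemma qfall_nat_zero (i n : ℕ) (h : i < n) : qfall i n = 0 := by
  refine Finset.prod_eq_zero (Finset.mem_range.mpr h) ?_
  simp [qint_zero]

lemma qfact_zero : qfact 0 = 1 := by simp [qfact, qfall]

lemma qfact_succ (n : ℕ) : qfact (n+1) = qint (n+1) * qfact n := by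
  unfold qfact
  push_cast
  exact qfall_succ' n n

lemma qfact_ne_zero (n : ℕ) : qfact n ≠ 0 := by
  induction n with
  | zero => rw [qfact_zero]; exact one_ne_zero
  | succ n ih =>
    rw [qfact_succ]
    exact mul_ne_zero (qint_ne_zero (by exact_mod_cast Nat.succ_ne_zero n)) ih

lemma qint_split (i n : ℤ) :
    qint (i+1) = T (-(i - n)) * qint (n+1) + T (n+1) * qint (i - n) := by
  simp only [qint, mul_sub, ← T_add]
  ring_nf

lemma qfact_mul_qbinom (i n : ℕ) : qfact n * qbinom i n = qfall i n := by
  induction i generalizing n with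
  | zero =>
    cases n with
    | zero => simp [qbinom, qfact_zero, qfall_zero]
    | succ n =>
      have h0 : qfall ((0:ℕ):ℤ) (n+1) = 0 := qfall_nat_zero 0 (n+1) (Nat.succ_pos n)
      simp only [qbinom, mul_zero]
      exact_mod_cast h0.symm
  | succ i ih =>
    cases n with
    | zero => simp [qbinom, qfact_zero, qfall_zero]
    | succ n =>
      have h1 := ih n
      have h2 := ih (n+1)
      have key : qfact (n+1) * qbinom (i+1) (n+1)
          = T (-((i:ℤ) - n)) * qint ((n:ℤ)+1) * (qfact n * qbinom i n)
            + T ((n:ℤ)+1) * (qfact (n+1) * qbinom i (n+1)) := by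
        rw [show qbinom (i+1) (n+1)
            = T (-((i : ℤ) - n)) * qbinom i n + T ((n : ℤ) + 1) * qbinom i (n + 1) from rfl,
          qfact_succ]
        push_cast
        ring
      rw [key, h1, h2, qfall_succ]
      have := qint_split (i : ℤ) (n : ℤ)
      push_cast
      calc T (-((i:ℤ) - n)) * qint ((n:ℤ)+1) * qfall i n
            + T ((n:ℤ)+1) * (qfall i n * qint ((i:ℤ) - n))
          = qfall i n * qint ((i:ℤ)+1) := by rw [this]; ring
        _ = qfall ((i:ℤ)+1) (n+1) := by rw [qfall_succ']; ring

lemma qbinom_eq_zero (i n : ℕ) (h : i < n) : qbinom i n = 0 := by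
  have := qfact_mul_qbinom i n
  rw [qfall_nat_zero i n h] at this
  exact (mul_eq_zero.mp this).resolve_left (qfact_ne_zero n)

lemma qfall_add (i : ℤ) (a b : ℕ) : qfall i (a+b) = qfall i a * qfall (i - a) b := by
  unfold qfall
  rw [Finset.prod_range_add]
  congr 1
  refine Finset.prod_congr rfl fun k _ => ?_
  congr 1; push_cast; ring

lemma qbinom_symm (N k : ℕ) (h : k ≤ N) : qbinom N k = qbinom N (N - k) := by
  have h1 := qfact_mul_qbinom N k
  have h2 := qfact_mul_qbinom N (N - k)
  have e1 : qfall (N:ℤ) k * qfact (N - k) = qfact N := by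
    have ha := qfall_add (N:ℤ) k (N - k)
    rw [Nat.add_sub_cancel' h] at ha
    rw [qfact, qfact, ha, Nat.cast_sub h]
  have e2 : qfall (N:ℤ) (N - k) * qfact k = qfact N := by
    have ha := qfall_add (N:ℤ) (N - k) k
    rw [Nat.sub_add_cancel h] at ha
    rw [qfact, qfact, ha, Nat.cast_sub h,
      show (N:ℤ) - ((N:ℤ) - (k:ℤ)) = (k:ℤ) by ring]
  have hc : (qfact k * qfact (N - k)) * qbinom N k
      = (qfact k * qfact (N - k)) * qbinom N (N - k) := by
    calc (qfact k * qfact (N - k)) * qbinom N k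
        = (qfact k * qbinom N k) * qfact (N - k) := by ring
      _ = qfall (N:ℤ) k * qfact (N - k) := by rw [h1]
      _ = qfact N := e1
      _ = qfall (N:ℤ) (N - k) * qfact k := e2.symm
      _ = (qfact (N - k) * qbinom N (N - k)) * qfact k := by rw [h2]
      _ = (qfact k * qfact (N - k)) * qbinom N (N - k) := by ring
  exact mul_left_cancel₀ (mul_ne_zero (qfact_ne_zero k) (qfact_ne_zero (N - k))) hc

lemma qfall_reflect (j : ℤ) (n : ℕ) :
    qfall (2*n - j) (2*n+1) = - qfall j (2*n+1) := by
  unfold qfall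
  rw [← Finset.prod_range_reflect (fun k => qint (j - k)) (2*n+1)]
  have : ∀ k ∈ Finset.range (2*n+1),
      qint (2*(n:ℤ) - j - k) = (-1) * qint (j - ((2*n+1-1-k : ℕ) : ℤ)) := by
    intro k hk
    have hk' : k ≤ 2*n := by simpa [Nat.lt_succ_iff] using hk
    have : ((2*n+1-1-k : ℕ) : ℤ) = 2*(n:ℤ) - k := by
      push_cast [Nat.cast_sub hk']; omega
    rw [this, show (j - (2*(n:ℤ) - k)) = -(2*(n:ℤ) - j - k) by ring, qint_neg]
    ring
  rw [Finset.prod_congr rfl this, Finset.prod_mul_distrib, Finset.prod_const]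
  simp [pow_succ, pow_mul]

/-- the alternating sum `S(N,b) = Σ_k (-1)^k [N,k] T(kb)`. -/
def qS (N : ℕ) (b : ℤ) : R := ∑ k ∈ range (N+1), (-1:R)^k * qbinom N k * T (k * b)

lemma qS_succ (N : ℕ) (b : ℤ) : qS (N+1) b = (1 - T (b - N)) * qS N (b+1) := by
  have hg : ∀ k : ℕ, ((-1:R)^(k+1) * qbinom (N+1) (k+1) * T (((k+1 : ℕ) : ℤ) * b))
      = (- T (b - N)) * ((-1:R)^k * qbinom N k * T (k * (b+1)))
        + (-1:R)^(k+1) * qbinom N (k+1) * T (((k+1 : ℕ) : ℤ) * (b+1)) := by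
    intro k
    rw [show qbinom (N+1) (k+1)
        = T (-((N : ℤ) - k)) * qbinom N k + T ((k : ℤ) + 1) * qbinom N (k + 1) from rfl]
    push_cast
    rw [mul_add, add_mul]
    congr 1
    · rw [pow_succ]
      have : (T (-((N:ℤ) - k)) : R) * T (((k:ℤ)+1) * b) = T (b - N) * T ((k:ℤ) * (b+1)) := by
        rw [← T_add, ← T_add]; ring_nf
      calc (-1:R)^k * -1 * (T (-((N:ℤ) - k)) * qbinom N k) * T (((k:ℤ)+1) * b)
          = -((-1:R)^k * qbinom N k) * (T (-((N:ℤ) - k)) * T (((k:ℤ)+1) * b)) := by ring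
        _ = -((-1:R)^k * qbinom N k) * (T (b - N) * T ((k:ℤ) * (b+1))) := by rw [this]
        _ = - T (b - N) * ((-1:R)^k * qbinom N k * T ((k:ℤ) * (b+1))) := by ring
    · have : (T ((k:ℤ)+1) : R) * T (((k:ℤ)+1) * b) = T (((k:ℤ)+1) * (b+1)) := by
        rw [← T_add]; ring_nf
      calc (-1:R)^k * -1 * (T ((k:ℤ)+1) * qbinom N (k+1)) * T (((k:ℤ)+1) * b)
          = (-1:R)^k * -1 * qbinom N (k+1) * (T ((k:ℤ)+1) * T (((k:ℤ)+1) * b)) := by ring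
        _ = (-1:R)^k * -1 * qbinom N (k+1) * T (((k:ℤ)+1) * (b+1)) := by rw [this]
        _ = (-1:R)^(k+1) * qbinom N (k+1) * T (((k:ℤ)+1) * (b+1)) := by rw [pow_succ]
  have hB : ∑ k ∈ range (N+1), (-1:R)^(k+1) * qbinom N (k+1) * T (((k+1 : ℕ) : ℤ) * (b+1))
      = qS N (b+1) - 1 := by
    rw [Finset.sum_range_succ, qbinom_eq_zero N (N+1) (Nat.lt_succ_self N)]
    rw [qS, Finset.sum_range_succ']
    simp [qbinom]
  have expand : qS (N+1) b
      = (∑ k ∈ range (N+1), ((- T (b - N)) * ((-1:R)^k * qbinom N k * T (k * (b+1)))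
          + (-1:R)^(k+1) * qbinom N (k+1) * T (((k+1 : ℕ) : ℤ) * (b+1)))) + 1 := by
    rw [qS, Finset.sum_range_succ']
    simp only [hg]
    simp [qbinom]
  rw [expand, Finset.sum_add_distrib, ← Finset.mul_sum, hB, ← qS]
  ring

lemma qS_prod (N : ℕ) (b : ℤ) :
    qS N b = ∏ j ∈ range N, (1 - T (b + N - 1 - 2*j)) := by
  induction N generalizing b with
  | zero => simp [qS, qbinom]
  | succ N ih =>
    rw [qS_succ, ih, Finset.prod_range_succ]
    have h1 : ∀ j ∈ range N, (1 - T ((b+1) + (N:ℤ) - 1 - 2*j) : R)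
        = 1 - T (b + ((N:ℕ)+1 : ℕ) - 1 - 2*j) := by
      intro j _
      congr 1
      push_cast
      ring_nf
    rw [Finset.prod_congr rfl h1]
    have h2 : (b + ((N:ℕ)+1 : ℕ) - 1 - 2*(N:ℤ)) = b - N := by push_cast; ring
    rw [mul_comm]
    congr 1
    push_cast [h2]
    ring_nf

lemma qS_vanish (N : ℕ) (b : ℤ) (j : ℕ) (hj : j < N) (he : b + N - 1 - 2*j = 0) :
    qS N b = 0 := by
  rw [qS_prod]
  refine Finset.prod_eq_zero (Finset.mem_range.mpr hj) ?_
  rw [he]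
  simp

lemma qQ_vanish (m : ℕ) : ∀ (r : ℕ) (c b : ℤ), Even b → |b| + 2*r ≤ 2*m →
    ∑ k ∈ range (2*m+2), (-1:R)^k * qbinom (2*m+1) k * T (k*b) * qfall (c - 2*k) r = 0 := by
  intro r
  induction r with
  | zero =>
    intro c b hb hle
    simp only [qfall_zero, mul_one]
    obtain ⟨a, ha⟩ := hb
    have hb2 : -(2*(m:ℤ)) ≤ b ∧ b ≤ 2*(m:ℤ) := abs_le.mp (by omega)
    obtain ⟨hbl, hbr⟩ := hb2
    have hj : (a + m : ℤ).toNat < 2*m+1 := by omega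
    have he : b + ((2*m+1 : ℕ) : ℤ) - 1 - 2*((a + m : ℤ).toNat : ℤ) = 0 := by
      have ht : ((a + m : ℤ).toNat : ℤ) = a + m := by omega
      push_cast [ht]
      omega
    have hv := qS_vanish (2*m+1) b _ hj he
    rw [qS, show 2*m+1+1 = 2*m+2 from rfl] at hv
    exact hv
  | succ r ih =>
    intro c b hb hle
    have habs1 : |b - 2| ≤ |b| + 2 := by
      calc |b - 2| = |b + (-2)| := by ring_nf
        _ ≤ |b| + |(-2 : ℤ)| := abs_add_le _ _
        _ = |b| + 2 := by norm_num
    have habs2 : |b + 2| ≤ |b| + 2 := by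
      calc |b + 2| ≤ |b| + |(2 : ℤ)| := abs_add_le _ _
        _ = |b| + 2 := by norm_num
    obtain ⟨a, ha⟩ := hb
    have key : ∀ k ∈ range (2*m+2),
        (-1:R)^k * qbinom (2*m+1) k * T (k*b) * qfall (c - 2*k) (r+1)
        = T (c - r) * ((-1:R)^k * qbinom (2*m+1) k * T (k*(b-2)) * qfall (c - 2*k) r)
          - T (r - c) * ((-1:R)^k * qbinom (2*m+1) k * T (k*(b+2)) * qfall (c - 2*k) r) := by
      intro k _
      rw [qfall_succ]
      have e1 : (T ((k:ℤ)*b) : R) * T (c - 2*k - r) = T (c - r) * T ((k:ℤ)*(b-2)) := by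
        rw [← T_add, ← T_add]; ring_nf
      have e2 : (T ((k:ℤ)*b) : R) * T (-(c - 2*(k:ℤ) - r)) = T (r - c) * T ((k:ℤ)*(b+2)) := by
        rw [← T_add, ← T_add]; ring_nf
      calc (-1:R)^k * qbinom (2*m+1) k * T ((k:ℤ)*b) * (qfall (c - 2*k) r * qint (c - 2*k - r))
          = ((-1:R)^k * qbinom (2*m+1) k * qfall (c - 2*k) r)
              * (T ((k:ℤ)*b) * T (c - 2*(k:ℤ) - r))
            - ((-1:R)^k * qbinom (2*m+1) k * qfall (c - 2*k) r)
              * (T ((k:ℤ)*b) * T (-(c - 2*(k:ℤ) - r))) := by rw [qint]; ring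
        _ = _ := by rw [e1, e2]; ring
    rw [Finset.sum_congr rfl key, Finset.sum_sub_distrib, ← Finset.mul_sum, ← Finset.mul_sum,
      ih c (b-2) ⟨a-1, by omega⟩ (by omega), ih c (b+2) ⟨a+1, by omega⟩ (by omega)]
    simp

end StmtAux

open StmtAux in
/-- `α_{m,n} = 0` unless `n/2 ≤ m ≤ 2n`, i.e. it vanishes when `n > 2m` or `m > 2n`. -/
theorem stmt_4 (m n : ℕ) (h : 2 * m < n ∨ 2 * n < m) : qalpha m n = 0 := by
  rcases h with h | h
  · rw [qalpha]
    refine Finset.sum_eq_zero fun k hk => ?_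
    rw [qbinom_eq_zero (2*m+n+1-2*k) (2*n+1) (by omega), mul_zero]
  · -- 2n < m
    have hF := qfact_ne_zero (2*n+1)
    suffices hs : qfact (2*n+1) * qalpha m n = 0 by
      exact (mul_eq_zero.mp hs).resolve_left hF
    set c : ℤ := 2*m+n+1 with hc
    have stepA : qfact (2*n+1) * qalpha m n
        = ∑ k ∈ range (m+1),
            (-1:R)^k * qbinom (2*m+1) k * qfall (c - 2*k) (2*n+1) := by
      rw [qalpha, Finset.mul_sum]
      refine Finset.sum_congr rfl fun k hk => ?_
      have hk' : k ≤ m := by simpa [Nat.lt_succ_iff] using hk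
      have hcast : ((2*m+n+1-2*k : ℕ) : ℤ) = c - 2*k := by
        push_cast [Nat.cast_sub (by omega : 2*k ≤ 2*m+n+1)]
        omega
      calc qfact (2*n+1) * ((-1:R)^k * qbinom (2*m+1) k * qbinom (2*m+n+1-2*k) (2*n+1))
          = (-1:R)^k * qbinom (2*m+1) k
              * (qfact (2*n+1) * qbinom (2*m+n+1-2*k) (2*n+1)) := by ring
        _ = (-1:R)^k * qbinom (2*m+1) k * qfall ((2*m+n+1-2*k : ℕ) : ℤ) (2*n+1) := by
              rw [qfact_mul_qbinom]
        _ = _ := by rw [hcast]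
    have hQ : ∑ k ∈ range (2*m+2),
        (-1:R)^k * qbinom (2*m+1) k * qfall (c - 2*k) (2*n+1) = 0 := by
      have := qQ_vanish m (2*n+1) c 0 Even.zero (by simp; omega)
      simpa using this
    have hsplit : ∑ k ∈ range (2*m+2),
        (-1:R)^k * qbinom (2*m+1) k * qfall (c - 2*k) (2*n+1)
        = (∑ k ∈ range (m+1), (-1:R)^k * qbinom (2*m+1) k * qfall (c - 2*k) (2*n+1))
          + ∑ k ∈ range (m+1),
              (-1:R)^(2*m+1-k) * qbinom (2*m+1) (2*m+1-k)
                * qfall (c - 2*((2*m+1-k : ℕ) : ℤ)) (2*n+1) := by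
      rw [show 2*m+2 = (m+1)+(m+1) by ring, Finset.sum_range_add]
      congr 1
      rw [← Finset.sum_range_reflect
        (fun k => (-1:R)^(2*m+1-k) * qbinom (2*m+1) (2*m+1-k)
          * qfall (c - 2*((2*m+1-k : ℕ) : ℤ)) (2*n+1)) (m+1)]
      refine Finset.sum_congr rfl fun k hk => ?_
      have hk' : k ≤ m := by simpa [Nat.lt_succ_iff] using hk
      rw [show 2*m+1-(m+1-1-k) = m+1+k by omega]
    have pair : ∀ k ∈ range (m+1),
        (-1:R)^(2*m+1-k) * qbinom (2*m+1) (2*m+1-k)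
          * qfall (c - 2*((2*m+1-k : ℕ) : ℤ)) (2*n+1)
        = (-1:R)^k * qbinom (2*m+1) k * qfall (c - 2*k) (2*n+1) := by
      intro k hk
      have hk' : k ≤ m := by simpa [Nat.lt_succ_iff] using hk
      have hsign : (-1:R)^(2*m+1-k) = -(-1:R)^k := by
        have h1 : (-1:R)^(2*m+1-k) * (-1:R)^k = -1 := by
          rw [← pow_add, show 2*m+1-k+k = 2*(m)+1 by omega, pow_succ, pow_mul]
          simp
        have h2 : ((-1:R)^k) * ((-1:R)^k) = 1 := by
          rw [← pow_add, ← two_mul, pow_mul]; simp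
        calc (-1:R)^(2*m+1-k) = (-1:R)^(2*m+1-k) * (((-1:R)^k) * ((-1:R)^k)) := by rw [h2]; ring
          _ = ((-1:R)^(2*m+1-k) * (-1:R)^k) * (-1:R)^k := by ring
          _ = -(-1:R)^k := by rw [h1]; ring
      have hsym : qbinom (2*m+1) (2*m+1-k) = qbinom (2*m+1) k := by
        rw [qbinom_symm (2*m+1) (2*m+1-k) (by omega), show 2*m+1-(2*m+1-k) = k by omega]
      have hfall : qfall (c - 2*(2*m+1-k : ℕ)) (2*n+1) = - qfall (c - 2*k) (2*n+1) := by
        have hcast : (c - 2*((2*m+1-k : ℕ) : ℤ)) = 2*(n:ℤ) - (c - 2*k) := by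
          push_cast [Nat.cast_sub (by omega : k ≤ 2*m+1), hc]
          ring
        rw [hcast, qfall_reflect]
      rw [hsign, hsym, hfall]
      ring
    rw [stepA]
    have h2P : (2 : R) * (∑ k ∈ range (m+1),
        (-1:R)^k * qbinom (2*m+1) k * qfall (c - 2*k) (2*n+1)) = 0 := by
      rw [two_mul]
      rw [hsplit, Finset.sum_congr rfl pair] at hQ
      linear_combination hQ
    exact (mul_eq_zero.mp h2P).resolve_left two_ne_zero'
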